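/- Let β ∼ Uniform(0,1) and, conditionally on β, let X₁, X₂ be i.i.d. with P(Xᵢ > x | β) = exp(−x^β), x > 0. Then P(X₁ ≤ x, X₂ ≤ x, X₁ + X₂ > x) = o(1/log x) as x → ∞; that is, the probability that both summands are at most x but their sum exceeds x is negligible relative to P(X₁ > x) ∼ E₁(1)/log x. -/

import Mathlib

open MeasureTheory Filter Set

-- final limit lemma
lemma aux_tendsto : Tendsto (fun L : ℝ => (L + Real.log 2) *
    (128 * ((Real.log L / L)^2 / 2 + Real.exp (-(L/2))))) atTop (nhds 0) := by
  have h1 : Tendsto (fun L : ℝ => Real.log L ^ 2 / L) atTop (nhds 0) := by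
    have := Real.tendsto_pow_log_div_mul_add_atTop 1 0 2 one_ne_zero
    simpa using this
  have h2 : Tendsto (fun L : ℝ => (L + Real.log 2) / L) atTop (nhds 1) := by
    have : Tendsto (fun L : ℝ => 1 + Real.log 2 / L) atTop (nhds (1 + 0)) :=
      tendsto_const_nhds.add (tendsto_const_nhds.div_atTop tendsto_id)
    rw [add_zero] at this
    refine this.congr' ?_
    filter_upwards [eventually_ne_atTop (0:ℝ)] with L hL
    field_simp
  have h3 : Tendsto (fun L : ℝ => (L + Real.log 2) * Real.exp (-(L/2))) atTop (nhds 0) := by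
    have hg : Tendsto (fun s : ℝ => (2*s + Real.log 2) * Real.exp (-s)) atTop (nhds 0) := by
      have ha := Real.tendsto_pow_mul_exp_neg_atTop_nhds_zero 1
      have hb : Tendsto (fun s : ℝ => Real.exp (-s)) atTop (nhds 0) :=
        Real.tendsto_exp_neg_atTop_nhds_zero
      have := (ha.const_mul 2).add (hb.const_mul (Real.log 2))
      simp only [pow_one, mul_zero, add_zero, zero_add] at this
      refine this.congr fun s => by ring
    have hd : Tendsto (fun L : ℝ => L / 2) atTop atTop :=
      tendsto_id.atTop_div_const two_pos
    have := hg.comp hd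
    refine this.congr fun L => ?_
    simp only [Function.comp]
    ring_nf
  have key := ((h1.mul h2).const_mul 64).add (h3.const_mul 128)
  norm_num at key
  refine key.congr fun L => ?_
  ring
lemma lemB {x : ℝ} (hx : 6 ≤ x) (hL : 1 < Real.log (x/2)) :
    (∫ β in Set.Ioo (0:ℝ) 1, β * Real.exp (-((x/2)^β / 2)))
      ≤ (Real.log (Real.log (x/2)) / Real.log (x/2))^2 / 2
        + Real.exp (-(Real.log (x/2) / 2)) := by
  set y := x/2 with hy
  set L := Real.log y with hLdef
  set β₀ := Real.log L / L with hβ₀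
  have hy1 : (1:ℝ) ≤ y := by rw [hy]; linarith
  have hy0 : (0:ℝ) < y := by linarith
  have hL0 : (0:ℝ) < L := by linarith
  have hβ₀pos : 0 < β₀ := div_pos (Real.log_pos hL) hL0
  have hβ₀lt : β₀ < 1 := (div_lt_one hL0).2 (by nlinarith [Real.log_le_sub_one_of_pos hL0])
  have hyβ₀ : y ^ β₀ = L := by
    rw [Real.rpow_def_of_pos hy0, hβ₀, mul_div_cancel₀ _ hL0.ne', Real.exp_log hL0]
  -- majorant
  set N : ℝ → ℝ := fun β => (Set.Ioc (0:ℝ) β₀).indicator (fun b => b) β + Real.exp (-(L/2)) with hN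
  have hidInt : IntegrableOn (fun b : ℝ => b) (Set.Ioc (0:ℝ) β₀) volume :=
    (intervalIntegral.intervalIntegrable_id (μ := volume) (a := 0) (b := β₀)).1
  have hIooInt : IntegrableOn (fun b : ℝ => b) (Set.Ioo (0:ℝ) 1) volume :=
    ((intervalIntegral.intervalIntegrable_id (μ := volume) (a := 0) (b := 1)).1).mono_set Set.Ioo_subset_Ioc_self
  have hNint : Integrable N (volume.restrict (Set.Ioo (0:ℝ) 1)) := by
    refine Integrable.add ?_ (integrableOn_const measure_Ioo_lt_top.ne)
    exact hIooInt.indicator measurableSet_Ioc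
  have hmono : ∀ β ∈ Set.Ioo (0:ℝ) 1, β * Real.exp (-(y^β / 2)) ≤ N β := by
    intro β hβ
    have hexp1 : Real.exp (-(y^β / 2)) ≤ 1 := by
      refine Real.exp_le_one_iff.2 (neg_nonpos.2 (by positivity))
    by_cases hcase : β ≤ β₀
    · have : (Set.Ioc (0:ℝ) β₀).indicator (fun b : ℝ => b) β = β := by
        rw [Set.indicator_of_mem (Set.mem_Ioc.2 ⟨hβ.1, hcase⟩)]
      rw [hN]; dsimp only; rw [this]
      nlinarith [Real.exp_pos (-(L/2)), hβ.1, Real.exp_pos (-(y^β/2)),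
        mul_le_of_le_one_right hβ.1.le hexp1]
    · push_neg at hcase
      have hind : (Set.Ioc (0:ℝ) β₀).indicator (fun b : ℝ => b) β = 0 :=
        Set.indicator_of_notMem (fun h => absurd h.2 (not_le.2 hcase)) _
      have h1 : y ^ β₀ ≤ y ^ β := Real.rpow_le_rpow_of_exponent_le hy1 hcase.le
      have h2 : Real.exp (-(y^β/2)) ≤ Real.exp (-(L/2)) := by
        rw [Real.exp_le_exp]; rw [← hyβ₀]; linarith
      rw [hN]; dsimp only; rw [hind, zero_add]
      calc β * Real.exp (-(y^β/2)) ≤ 1 * Real.exp (-(y^β/2)) := by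
            have := Real.exp_pos (-(y^β/2)); nlinarith [hβ.2]
        _ = Real.exp (-(y^β/2)) := one_mul _
        _ ≤ _ := h2
  have step : (∫ β in Set.Ioo (0:ℝ) 1, β * Real.exp (-(y^β / 2))) ≤
      ∫ β in Set.Ioo (0:ℝ) 1, N β := by
    refine integral_mono_of_nonneg ?_ hNint ?_
    · refine (ae_restrict_iff' measurableSet_Ioo).2 (ae_of_all _ fun β hβ => ?_)
      simp only [Pi.zero_apply]
      exact mul_nonneg hβ.1.le (Real.exp_pos _).le
    · exact (ae_restrict_iff' measurableSet_Ioo).2 (ae_of_all _ hmono)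
  refine step.trans ?_
  have hNval : (∫ β in Set.Ioo (0:ℝ) 1, N β) = β₀^2/2 + Real.exp (-(L/2)) := by
    rw [hN]
    rw [integral_add (hIooInt.indicator measurableSet_Ioc)
      (integrableOn_const measure_Ioo_lt_top.ne)]
    have h1 : (∫ β in Set.Ioo (0:ℝ) 1, (Set.Ioc (0:ℝ) β₀).indicator (fun b => b) β) = β₀^2/2 := by
      rw [setIntegral_indicator measurableSet_Ioc]
      have hsub : Set.Ioo (0:ℝ) 1 ∩ Set.Ioc (0:ℝ) β₀ = Set.Ioc (0:ℝ) β₀ := by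
        refine Set.inter_eq_right.2 fun β hβ => ⟨hβ.1, lt_of_le_of_lt hβ.2 hβ₀lt⟩
      rw [hsub, ← intervalIntegral.integral_of_le hβ₀pos.le]
      simp [integral_id]
    have h2 : (∫ _β in Set.Ioo (0:ℝ) 1, Real.exp (-(L/2))) = Real.exp (-(L/2)) := by
      rw [setIntegral_const]; simp [Real.volume_Ioo]
    rw [h1, h2]
  rw [hNval]
lemma lemA {x β : ℝ} (hx : 6 ≤ x) (hβ0 : 0 < β) (hβ1 : β < 1) :
    (∫ u in Set.Ioc (0:ℝ) x, ∫ v in Set.Ioc (x-u) x,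
        β ^ 2 * u ^ (β - 1) * v ^ (β - 1) * Real.exp (-(u ^ β + v ^ β)))
    ≤ 128 * (β * Real.exp (-((x/2) ^ β / 2))) := by
  set y := x/2 with hy
  have hy1 : (1:ℝ) ≤ y := by rw [hy]; linarith
  have hy0 : (0:ℝ) < y := by linarith
  have hx0 : (0:ℝ) < x := by linarith
  have hyx : y ≤ x := by rw [hy]; linarith
  set t := y ^ β with htdef
  have ht1 : (1:ℝ) ≤ t := Real.one_le_rpow hy1 hβ0.le
  have ht0 : (0:ℝ) < t := by linarith
  have hrpow_int : IntegrableOn (fun u : ℝ => u ^ (β - 1)) (Set.Ioc (0:ℝ) x) volume :=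
    (intervalIntegral.intervalIntegrable_rpow' (by linarith : (-1:ℝ) < β - 1)).1
  -- basic rpow facts
  have hyβx : y ^ β ≤ x ^ β := Real.rpow_le_rpow hy0.le hyx hβ0.le
  have hxβ0 : (0:ℝ) ≤ x ^ β := Real.rpow_nonneg hx0.le _
  have hxb2t : x ^ β ≤ 2 * t := by
    have h2y : x = 2 * y := by rw [hy]; ring
    have : x ^ β = 2 ^ β * y ^ β := by rw [h2y, Real.mul_rpow (by norm_num) hy0.le]
    have h2β : (2:ℝ) ^ β ≤ 2 := by
      calc (2:ℝ) ^ β ≤ 2 ^ (1:ℝ) := Real.rpow_le_rpow_of_exponent_le one_le_two hβ1.le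
        _ = 2 := Real.rpow_one 2
    rw [this, htdef]; nlinarith [Real.rpow_nonneg hy0.le β]
  have hxyb : x ^ β - y ^ β ≤ 2 * β * t := by
    have h2y : x = 2 * y := by rw [hy]; ring
    have hmul : x ^ β = 2 ^ β * y ^ β := by rw [h2y, Real.mul_rpow (by norm_num) hy0.le]
    have h2βdef : (2:ℝ) ^ β = Real.exp (β * Real.log 2) := by
      rw [Real.rpow_def_of_pos two_pos, mul_comm]
    have hlog2 : Real.log 2 ≤ 1 := by nlinarith [Real.log_le_sub_one_of_pos (two_pos (α := ℝ))]
    have hlog2' : (0:ℝ) < Real.log 2 := Real.log_pos one_lt_two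
    have h2β2 : (2:ℝ) ^ β ≤ 2 := by
      calc (2:ℝ) ^ β ≤ 2 ^ (1:ℝ) := Real.rpow_le_rpow_of_exponent_le one_le_two hβ1.le
        _ = 2 := Real.rpow_one 2
    -- 2^β - 1 ≤ 2 β
    have key : (2:ℝ) ^ β - 1 ≤ 2 * β := by
      set s := β * Real.log 2 with hs
      have hs0 : 0 ≤ s := by positivity
      have h1 : -s + 1 ≤ Real.exp (-s) := Real.add_one_le_exp (-s)
      have h2 : Real.exp s * Real.exp (-s) = 1 := by rw [← Real.exp_add]; simp
      have h3 : Real.exp s ≤ 2 := by rw [← h2βdef]; exact h2β2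
      -- exp s - 1 ≤ s exp s ≤ 2 s ≤ 2 β
      have h4 : Real.exp s - 1 ≤ s * Real.exp s := by nlinarith [Real.exp_pos s]
      have h5 : s * Real.exp s ≤ 2 * s := by nlinarith [Real.exp_pos s]
      rw [h2βdef]
      nlinarith
    rw [hmul, htdef]
    nlinarith [Real.rpow_nonneg hy0.le β]
  -- the pointwise-in-u upper bound W
  set W : ℝ → ℝ := fun u => β * u ^ (β - 1) * Real.exp (-(u ^ β)) *
      Real.exp (-((x - u) ^ β)) * (x ^ β - (x - u) ^ β) with hW
  have hJW : ∀ u ∈ Set.Ioc (0:ℝ) x,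
      (∫ v in Set.Ioc (x-u) x,
        β ^ 2 * u ^ (β - 1) * v ^ (β - 1) * Real.exp (-(u ^ β + v ^ β))) ≤ W u := by
    intro u hu
    have hu0 : (0:ℝ) < u := hu.1
    have hxu0 : (0:ℝ) ≤ x - u := by linarith [hu.2]
    have hxux : x - u ≤ x := by linarith
    set C := β ^ 2 * u ^ (β - 1) * Real.exp (-(u ^ β)) * Real.exp (-((x-u) ^ β)) with hC
    have hCnn : 0 ≤ C := by
      have := Real.rpow_nonneg hu0.le (β - 1); positivity
    have hble : (∫ v in Set.Ioc (x-u) x,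
        β ^ 2 * u ^ (β - 1) * v ^ (β - 1) * Real.exp (-(u ^ β + v ^ β)))
        ≤ ∫ v in Set.Ioc (x-u) x, C * v ^ (β - 1) := by
      refine integral_mono_of_nonneg ?_ ?_ ?_
      · refine (ae_restrict_iff' measurableSet_Ioc).2 (ae_of_all _ fun v hv => ?_)
        simp only [Pi.zero_apply]
        have hv0 : (0:ℝ) ≤ v := le_trans hxu0 hv.1.le
        have := Real.rpow_nonneg hu0.le (β - 1)
        have := Real.rpow_nonneg hv0 (β - 1)
        positivity
      · exact ((intervalIntegral.intervalIntegrable_rpow'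
          (by linarith : (-1:ℝ) < β - 1)).1).const_mul C
      · refine (ae_restrict_iff' measurableSet_Ioc).2 (ae_of_all _ fun v hv => ?_)
        have hv0 : (0:ℝ) ≤ v := le_trans hxu0 hv.1.le
        have hsplit : Real.exp (-(u ^ β + v ^ β))
            = Real.exp (-(u ^ β)) * Real.exp (-(v ^ β)) := by
          rw [← Real.exp_add]; ring_nf
        have hvb : (x-u) ^ β ≤ v ^ β := Real.rpow_le_rpow hxu0 hv.1.le hβ0.le
        have hexp : Real.exp (-(v ^ β)) ≤ Real.exp (-((x-u) ^ β)) := by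
          rw [Real.exp_le_exp]; linarith
        have hnn : 0 ≤ β ^ 2 * u ^ (β - 1) * v ^ (β - 1) * Real.exp (-(u ^ β)) := by
          have := Real.rpow_nonneg hu0.le (β - 1)
          have := Real.rpow_nonneg hv0 (β - 1)
          positivity
        calc β ^ 2 * u ^ (β - 1) * v ^ (β - 1) * Real.exp (-(u ^ β + v ^ β))
            = (β ^ 2 * u ^ (β - 1) * v ^ (β - 1) * Real.exp (-(u ^ β)))
              * Real.exp (-(v ^ β)) := by rw [hsplit]; ring
          _ ≤ (β ^ 2 * u ^ (β - 1) * v ^ (β - 1) * Real.exp (-(u ^ β)))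
              * Real.exp (-((x-u) ^ β)) := mul_le_mul_of_nonneg_left hexp hnn
          _ = C * v ^ (β - 1) := by rw [hC]; ring
    refine hble.trans ?_
    have hcomp : (∫ v in Set.Ioc (x-u) x, C * v ^ (β - 1)) = W u := by
      rw [← intervalIntegral.integral_of_le hxux, intervalIntegral.integral_const_mul,
        integral_rpow (Or.inl (by linarith : (-1:ℝ) < β - 1))]
      have hb : β - 1 + 1 = β := by ring
      rw [hb, hC, hW]
      field_simp
    exact le_of_eq hcomp
  -- the piecewise majorant M
  set c1 := β * Real.exp (-t) * (x ^ β - y ^ β) with hc1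
  set c2 := β * Real.exp (-t) * x ^ β with hc2
  have hc1nn : 0 ≤ c1 := by
    rw [hc1]
    exact mul_nonneg (mul_nonneg hβ0.le (Real.exp_pos (-t)).le) (by linarith)
  have hc2nn : 0 ≤ c2 := by
    rw [hc2]
    exact mul_nonneg (mul_nonneg hβ0.le (Real.exp_pos (-t)).le) hxβ0
  set M : ℝ → ℝ := fun u => c1 * u ^ (β - 1)
      + (Set.Ioc y x).indicator (fun u => c2 * u ^ (β - 1)) u with hM
  have hWM : ∀ u ∈ Set.Ioc (0:ℝ) x, W u ≤ M u := by
    intro u hu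
    have hu0 : (0:ℝ) < u := hu.1
    have hurp : (0:ℝ) ≤ u ^ (β - 1) := Real.rpow_nonneg hu0.le _
    have hxu0 : (0:ℝ) ≤ x - u := by linarith [hu.2]
    have hxuβ : (x - u) ^ β ≤ x ^ β := Real.rpow_le_rpow hxu0 (by linarith) hβ0.le
    have hxuβ0 : (0:ℝ) ≤ (x - u) ^ β := Real.rpow_nonneg hxu0 _
    by_cases hcase : u ≤ y
    · have hyxu : y ≤ x - u := by rw [hy]; rw [hy] at hcase; linarith
      have h1 : Real.exp (-(u ^ β)) ≤ 1 :=
        Real.exp_le_one_iff.2 (neg_nonpos.2 (Real.rpow_nonneg hu0.le _))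
      have h2 : Real.exp (-((x - u) ^ β)) ≤ Real.exp (-t) := by
        rw [Real.exp_le_exp, htdef]
        have := Real.rpow_le_rpow hy0.le hyxu hβ0.le
        linarith
      have h3 : x ^ β - (x - u) ^ β ≤ x ^ β - y ^ β := by
        have := Real.rpow_le_rpow hy0.le hyxu hβ0.le
        linarith
      have h3' : 0 ≤ x ^ β - (x - u) ^ β := by linarith
      have hWc1 : W u ≤ c1 * u ^ (β - 1) := by
        rw [hW, hc1]
        calc β * u ^ (β - 1) * Real.exp (-(u ^ β)) * Real.exp (-((x - u) ^ β))
              * (x ^ β - (x - u) ^ β)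
            ≤ β * u ^ (β - 1) * 1 * Real.exp (-t) * (x ^ β - y ^ β) := by
              gcongr
          _ = β * Real.exp (-t) * (x ^ β - y ^ β) * u ^ (β - 1) := by ring
      have hind : 0 ≤ (Set.Ioc y x).indicator (fun u => c2 * u ^ (β - 1)) u := by
        refine Set.indicator_nonneg (fun v hv => ?_) u
        have : (0:ℝ) ≤ v := le_trans hy0.le hv.1.le
        have := Real.rpow_nonneg this (β - 1)
        positivity
      rw [hM]; dsimp only; linarith
    · push_neg at hcase
      have hmem : u ∈ Set.Ioc y x := ⟨hcase, hu.2⟩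
      have h1 : Real.exp (-(u ^ β)) ≤ Real.exp (-t) := by
        rw [Real.exp_le_exp, htdef]
        have := Real.rpow_le_rpow hy0.le hcase.le hβ0.le
        linarith
      have h2 : Real.exp (-((x - u) ^ β)) ≤ 1 :=
        Real.exp_le_one_iff.2 (neg_nonpos.2 hxuβ0)
      have h3 : x ^ β - (x - u) ^ β ≤ x ^ β := by linarith
      have h3' : 0 ≤ x ^ β - (x - u) ^ β := by linarith
      have hWc2 : W u ≤ c2 * u ^ (β - 1) := by
        rw [hW, hc2]
        calc β * u ^ (β - 1) * Real.exp (-(u ^ β)) * Real.exp (-((x - u) ^ β))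
              * (x ^ β - (x - u) ^ β)
            ≤ β * u ^ (β - 1) * Real.exp (-t) * 1 * (x ^ β) := by
              gcongr
          _ = β * Real.exp (-t) * x ^ β * u ^ (β - 1) := by ring
      have hc1u : 0 ≤ c1 * u ^ (β - 1) := mul_nonneg hc1nn hurp
      rw [hM]; dsimp only; rw [Set.indicator_of_mem hmem]
      linarith
  -- integrability of M
  have hMint : Integrable M (volume.restrict (Set.Ioc (0:ℝ) x)) := by
    refine Integrable.add (hrpow_int.const_mul c1) ?_
    exact ((hrpow_int.const_mul c2)).indicator measurableSet_Ioc
  -- main comparison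
  have hcomp : (∫ u in Set.Ioc (0:ℝ) x, ∫ v in Set.Ioc (x-u) x,
      β ^ 2 * u ^ (β - 1) * v ^ (β - 1) * Real.exp (-(u ^ β + v ^ β)))
      ≤ ∫ u in Set.Ioc (0:ℝ) x, M u := by
    refine integral_mono_of_nonneg ?_ hMint ?_
    · refine (ae_restrict_iff' measurableSet_Ioc).2 (ae_of_all _ fun u hu => ?_)
      simp only [Pi.zero_apply]
      refine setIntegral_nonneg measurableSet_Ioc fun v hv => ?_
      have hv0 : (0:ℝ) ≤ v := le_trans (by linarith [hu.2] : (0:ℝ) ≤ x - u) hv.1.le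
      have := Real.rpow_nonneg hu.1.le (β - 1)
      have := Real.rpow_nonneg hv0 (β - 1)
      positivity
    · refine (ae_restrict_iff' measurableSet_Ioc).2 (ae_of_all _ fun u hu => ?_)
      exact (hJW u hu).trans (hWM u hu)
  refine hcomp.trans ?_
  -- compute ∫ M
  have hval : (∫ u in Set.Ioc (0:ℝ) x, M u)
      = c1 * (x ^ β / β) + c2 * ((x ^ β - y ^ β) / β) := by
    rw [hM]
    rw [integral_add (hrpow_int.const_mul c1)
      (((hrpow_int.const_mul c2)).indicator measurableSet_Ioc)]
    have hA : (∫ u in Set.Ioc (0:ℝ) x, c1 * u ^ (β - 1)) = c1 * (x ^ β / β) := by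
      rw [← intervalIntegral.integral_of_le hx0.le, intervalIntegral.integral_const_mul,
        integral_rpow (Or.inl (by linarith : (-1:ℝ) < β - 1))]
      have hb : β - 1 + 1 = β := by ring
      rw [hb, Real.zero_rpow hβ0.ne']
      try ring
    have hB : (∫ u in Set.Ioc (0:ℝ) x,
        (Set.Ioc y x).indicator (fun u => c2 * u ^ (β - 1)) u)
        = c2 * ((x ^ β - y ^ β) / β) := by
      rw [setIntegral_indicator measurableSet_Ioc]
      have hsub : Set.Ioc (0:ℝ) x ∩ Set.Ioc y x = Set.Ioc y x := by
        refine Set.inter_eq_right.2 fun v hv => ⟨lt_of_lt_of_le hy0 hv.1.le, hv.2⟩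
      rw [hsub, ← intervalIntegral.integral_of_le hyx, intervalIntegral.integral_const_mul,
        integral_rpow (Or.inl (by linarith : (-1:ℝ) < β - 1))]
      have hb : β - 1 + 1 = β := by ring
      rw [hb]
    rw [hA, hB]
  rw [hval]
  -- final arithmetic
  have hsum : c1 * (x ^ β / β) + c2 * ((x ^ β - y ^ β) / β)
      = 2 * Real.exp (-t) * x ^ β * (x ^ β - y ^ β) := by
    rw [hc1, hc2]; field_simp; ring
  rw [hsum]
  have h16 : t ^ 2 ≤ 16 * Real.exp (t / 2) := by
    have hq := Real.add_one_le_exp (t / 4)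
    have hsq : Real.exp (t / 4) ^ 2 = Real.exp (t / 2) := by
      rw [sq, ← Real.exp_add]; ring_nf
    have hple : (t / 4 + 1) ^ 2 ≤ Real.exp (t / 4) ^ 2 :=
      pow_le_pow_left₀ (by linarith) hq 2
    rw [hsq] at hple
    have hexpand : (t / 4 + 1) ^ 2 = t ^ 2 / 16 + t / 2 + 1 := by ring
    linarith
  have hee : Real.exp (-t) * Real.exp (t / 2) = Real.exp (-(t / 2)) := by
    rw [← Real.exp_add]; ring_nf
  have hXB : x ^ β * (x ^ β - y ^ β) ≤ (2 * t) * (2 * β * t) := by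
    have h0 : 0 ≤ x ^ β - y ^ β := by linarith
    exact mul_le_mul hxb2t hxyb h0 (by linarith)
  have hte : t ^ 2 * Real.exp (-t) ≤ 16 * Real.exp (-(t / 2)) := by
    have := mul_le_mul_of_nonneg_right h16 (Real.exp_pos (-t)).le
    calc t ^ 2 * Real.exp (-t) ≤ 16 * Real.exp (t / 2) * Real.exp (-t) := this
      _ = 16 * Real.exp (-(t / 2)) := by rw [mul_assoc, mul_comm (Real.exp (t/2)), hee]
  calc 2 * Real.exp (-t) * x ^ β * (x ^ β - y ^ β)
      = 2 * Real.exp (-t) * (x ^ β * (x ^ β - y ^ β)) := by ring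
    _ ≤ 2 * Real.exp (-t) * ((2 * t) * (2 * β * t)) :=
        mul_le_mul_of_nonneg_left hXB (by positivity)
    _ = 8 * β * (t ^ 2 * Real.exp (-t)) := by ring
    _ ≤ 8 * β * (16 * Real.exp (-(t / 2))) :=
        mul_le_mul_of_nonneg_left hte (by linarith)
    _ = 128 * (β * Real.exp (-(t / 2))) := by ring
theorem intermediate_term_negligible_weibull_mixture :
    Tendsto
      (fun x : ℝ => Real.log x *
        ∫ β in Set.Ioo (0 : ℝ) 1, ∫ u in Set.Ioc (0 : ℝ) x, ∫ v in Set.Ioc (x - u) x,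
          β ^ 2 * u ^ (β - 1) * v ^ (β - 1) * Real.exp (-(u ^ β + v ^ β)))
      atTop (nhds 0) := by
  have hcomp : Tendsto (fun x : ℝ => Real.log (x/2)) atTop atTop :=
    Real.tendsto_log_atTop.comp (tendsto_id.atTop_div_const two_pos)
  refine tendsto_of_tendsto_of_tendsto_of_le_of_le' tendsto_const_nhds
    (aux_tendsto.comp hcomp) ?_ ?_
  · -- lower bound 0
    filter_upwards [eventually_ge_atTop (6:ℝ)] with x hx
    refine mul_nonneg (Real.log_nonneg (by linarith)) ?_
    refine setIntegral_nonneg measurableSet_Ioo fun β hβ => ?_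
    refine setIntegral_nonneg measurableSet_Ioc fun u hu => ?_
    refine setIntegral_nonneg measurableSet_Ioc fun v hv => ?_
    have hv0 : (0:ℝ) ≤ v := le_trans (by linarith [hu.2] : (0:ℝ) ≤ x - u) hv.1.le
    have := Real.rpow_nonneg hu.1.le (β - 1)
    have := Real.rpow_nonneg hv0 (β - 1)
    positivity
  · -- upper bound
    filter_upwards [eventually_ge_atTop (6:ℝ), hcomp.eventually_gt_atTop 1] with x hx hL
    have hx0 : (0:ℝ) < x := by linarith
    have hy0 : (0:ℝ) < x/2 := by linarith
    -- integrability of the majorant in β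
    have hmajc : Continuous fun β : ℝ => 128 * (β * Real.exp (-((x/2) ^ β / 2))) := by
      have h1 : Continuous fun β : ℝ => (x/2) ^ β := by
        have : (fun β : ℝ => (x/2) ^ β) = fun β => Real.exp (Real.log (x/2) * β) := by
          funext β; rw [Real.rpow_def_of_pos hy0]
        rw [this]
        exact Real.continuous_exp.comp (continuous_const.mul continuous_id)
      continuity
    have hmajint : Integrable (fun β : ℝ => 128 * (β * Real.exp (-((x/2) ^ β / 2))))
        (volume.restrict (Set.Ioo (0:ℝ) 1)) := by
      exact (hmajc.integrableOn_Icc (μ := volume) (a := 0) (b := 1)).mono_set Set.Ioo_subset_Icc_self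
    have step1 : (∫ β in Set.Ioo (0 : ℝ) 1, ∫ u in Set.Ioc (0 : ℝ) x,
          ∫ v in Set.Ioc (x - u) x,
          β ^ 2 * u ^ (β - 1) * v ^ (β - 1) * Real.exp (-(u ^ β + v ^ β)))
        ≤ ∫ β in Set.Ioo (0:ℝ) 1, 128 * (β * Real.exp (-((x/2) ^ β / 2))) := by
      refine integral_mono_of_nonneg ?_ hmajint ?_
      · refine (ae_restrict_iff' measurableSet_Ioo).2 (ae_of_all _ fun β hβ => ?_)
        simp only [Pi.zero_apply]
        refine setIntegral_nonneg measurableSet_Ioc fun u hu => ?_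
        refine setIntegral_nonneg measurableSet_Ioc fun v hv => ?_
        have hv0 : (0:ℝ) ≤ v := le_trans (by linarith [hu.2] : (0:ℝ) ≤ x - u) hv.1.le
        have := Real.rpow_nonneg hu.1.le (β - 1)
        have := Real.rpow_nonneg hv0 (β - 1)
        positivity
      · refine (ae_restrict_iff' measurableSet_Ioo).2 (ae_of_all _ fun β hβ => ?_)
        exact lemA hx hβ.1 hβ.2
    have step2 : (∫ β in Set.Ioo (0:ℝ) 1, 128 * (β * Real.exp (-((x/2) ^ β / 2))))
        ≤ 128 * ((Real.log (Real.log (x/2)) / Real.log (x/2))^2 / 2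
          + Real.exp (-(Real.log (x/2) / 2))) := by
      rw [MeasureTheory.integral_const_mul]
      exact mul_le_mul_of_nonneg_left (lemB hx hL) (by norm_num)
    have hlogx : Real.log x = Real.log (x/2) + Real.log 2 := by
      rw [Real.log_div hx0.ne' two_ne_zero]; ring
    have hlx0 : 0 ≤ Real.log (x/2) + Real.log 2 := by
      have := Real.log_pos (one_lt_two (α := ℝ)); linarith
    calc Real.log x * _ ≤ Real.log x * (128 * ((Real.log (Real.log (x/2)) / Real.log (x/2))^2 / 2
          + Real.exp (-(Real.log (x/2) / 2)))) := by
          rw [hlogx]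
          exact mul_le_mul_of_nonneg_left (step1.trans step2) hlx0
      _ = ((fun L : ℝ => (L + Real.log 2) *
          (128 * ((Real.log L / L)^2 / 2 + Real.exp (-(L/2))))) ∘
          (fun x : ℝ => Real.log (x/2))) x := by
          simp only [Function.comp]
          rw [hlogx]
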